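/- Let $\mathcal{D}$ be a Krull–Schmidt triangulated category with t-structure $t$, and let $f \colon P \to P'$ be a morphism between derived projective objects. Then the following are equivalent: (i) $f$ is a split epimorphism; (ii) $\mathrm{cone}(f) \in \mathcal{D}^{t<0}$; (iii) $H_t^0(f)$ is an epimorphism in $\heartsuit_t$; (iv) $H_t^0(f)$ is a split epimorphism in $\heartsuit_t$. -/

import Mathlib

open CategoryTheory Limits Pretriangulated

namespace Paper

universe v u

variable {C : Type u} [Category.{v} C] [Preadditive C] [HasZeroObject C]
  [HasShift C ℤ] [∀ n : ℤ, (shiftFunctor C n).Additive] [Pretriangulated C]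

open CategoryTheory.Triangulated

/-- The right perpendicular of a class of objects. -/
def rPerp (T : Set C) : Set C := {Y | ∀ X ∈ T, ∀ f : X ⟶ Y, f = 0}

/-- The left perpendicular of a class of objects. -/
def lPerp (T : Set C) : Set C := {X | ∀ Y ∈ T, ∀ f : X ⟶ Y, f = 0}

/-- `S^{⊥_{>0}}`. -/
def perpGT (S : Set C) : Set C := {X | ∀ P ∈ S, ∀ m : ℤ, 0 < m → ∀ f : P ⟶ X⟦m⟧, f = 0}

/-- `S^{⊥_{<0}}`. -/
def perpLT (S : Set C) : Set C := {X | ∀ P ∈ S, ∀ m : ℤ, m < 0 → ∀ f : P ⟶ X⟦m⟧, f = 0}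

/-- The pair `(S^{⊥_{>0}}, S^{⊥_{<0}})` is the t-structure `t`. -/
def IsSiltingTStructureFor (S : Set C) (t : TStructure C) : Prop :=
  (∀ X : C, t.le 0 X ↔ X ∈ perpGT S) ∧ (∀ X : C, t.ge 0 X ↔ X ∈ perpLT S)

/-- `X` is a retract (direct summand) of `Y`. -/
def IsRetractOf (X Y : C) : Prop := ∃ (i : X ⟶ Y) (r : Y ⟶ X), i ≫ r = 𝟙 X


/-- An indecomposable object: nonzero, and not a nontrivial biproduct. -/
def IndecObj {A : Type*} [Category A] [Limits.HasZeroMorphisms A]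
    [HasBinaryBiproducts A] (X : A) : Prop :=
  ¬ IsZero X ∧ ∀ Y Z : A, Nonempty (X ≅ Y ⊞ Z) → IsZero Y ∨ IsZero Z

section Biprod
variable [HasFiniteBiproducts C]

/-- The Karoubi closure: direct summands of finite coproducts of objects of `S`. -/
def Kar (S : Set C) : Set C :=
  {X | ∃ (n : ℕ) (f : Fin n → C), (∀ i, f i ∈ S) ∧ IsRetractOf X (⨁ f)}

/-- A class of objects is Krull–Schmidt: every object is a finite biproduct of
objects of the class with local endomorphism rings. -/
def KrullSchmidtOn (T : Set C) : Prop :=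
  ∀ X ∈ T, ∃ (n : ℕ) (f : Fin n → C),
    (∀ i, f i ∈ T ∧ IsLocalRing (End (f i))) ∧ Nonempty (X ≅ ⨁ f)

/-- The category `C` is Krull–Schmidt. -/
def IsKrullSchmidt : Prop :=
  ∀ X : C, ∃ (n : ℕ) (f : Fin n → C),
    (∀ i, IsLocalRing (End (f i))) ∧ Nonempty (X ≅ ⨁ f)

/-- A silting collection: pairwise non-isomorphic indecomposables whose Karoubi
closure is Krull–Schmidt, such that the perpendicular pair is the t-structure `t`. -/
structure IsSiltingCollection (S : Set C) (t : TStructure C) : Prop where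
  indec : ∀ P ∈ S, IndecObj P
  pairwise_noniso : ∀ P ∈ S, ∀ Q ∈ S, P ≠ Q → IsEmpty (P ≅ Q)
  kar_ks : KrullSchmidtOn (Kar S)
  tstr : IsSiltingTStructureFor S t

end Biprod

/-- Derived projective objects with respect to a t-structure. -/
def IsDerivedProjective (t : TStructure C) (P : C) : Prop :=
  t.le 0 P ∧ ∀ (X : C), t.le 0 X → ∀ f : P ⟶ X⟦(1 : ℤ)⟧, f = 0

/-- The heart of a t-structure, as a class of objects. -/
def heartSet (t : TStructure C) : Set C := {X | t.le 0 X ∧ t.ge 0 X}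

/-- The heart of a t-structure, as a full subcategory. -/
abbrev Heart (t : TStructure C) := ObjectProperty.FullSubcategory (heartSet t)

instance (t : TStructure C) : Category (Heart t) := ObjectProperty.FullSubcategory.category _

instance (P : C → Prop) : Preadditive (ObjectProperty.FullSubcategory P) where
  homGroup X Y := InducedCategory.homEquiv.addCommGroup
  add_comp _ _ _ _ _ _ := by ext; apply Preadditive.add_comp
  comp_add _ _ _ _ _ _ := by ext; apply Preadditive.comp_add

/-- Truncation data for a t-structure: the truncation functors `t_{≤0}` (right adjoint
to the inclusion of `D^{t≤0}`), `t_{≥0}` (left adjoint to the inclusion of `D^{t≥0}`),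
and the zeroth cohomology functor `H = t_{≤0} ∘ t_{≥0}`. -/
structure TruncationData (t : TStructure C) where
  /-- the zeroth cohomology functor -/
  H : C ⥤ C
  H_heart : ∀ X : C, H.obj X ∈ heartSet t
  τle : C ⥤ C
  τleCounit : τle ⟶ 𝟭 C
  τle_mem : ∀ X : C, t.le 0 (τle.obj X)
  τle_fac : ∀ (X Z : C), t.le 0 Z → ∀ f : Z ⟶ X,
    ∃! g : Z ⟶ τle.obj X, g ≫ τleCounit.app X = f
  τge : C ⥤ C
  τgeUnit : 𝟭 C ⟶ τge
  τge_mem : ∀ X : C, t.ge 0 (τge.obj X)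
  τge_fac : ∀ (X Z : C), t.ge 0 Z → ∀ f : X ⟶ Z,
    ∃! g : τge.obj X ⟶ Z, τgeUnit.app X ≫ g = f
  H_eq : H = τge ⋙ τle

/-- The zeroth cohomology functor, valued in the heart. -/
def TruncationData.Hh {t : TStructure C} (TD : TruncationData t) : C ⥤ Heart t :=
  ObjectProperty.lift _ TD.H TD.H_heart

/-- A projective cover: an essential epimorphism from a projective object. -/
def IsProjectiveCover {A : Type*} [Category A] {P X : A} (π : P ⟶ X) : Prop :=
  Projective P ∧ Epi π ∧ ∀ (R : A) (g : R ⟶ P), Epi (g ≫ π) → Epi g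

/-- A derived projective cover of `X`. -/
def IsDerivedProjectiveCover {t : TStructure C} (TD : TruncationData t)
    {P X : C} (π : P ⟶ X) : Prop :=
  IsDerivedProjective t P ∧ IsProjectiveCover (TD.Hh.map π)

/-- A t-structure is non-degenerate. -/
def NonDegenerate (t : TStructure C) : Prop :=
  (∀ X : C, (∀ n : ℤ, t.le n X) → IsZero X) ∧ (∀ X : C, (∀ n : ℤ, t.ge n X) → IsZero X)

/-- An object of a category has finite length: bounded chains of subobjects. -/
def FiniteLengthObj {A : Type*} [Category A] (X : A) : Prop :=
  ∃ n : ℕ, ∀ s : Fin (n + 1) → Subobject X, ¬ StrictMono s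

/-- `D` has derived projectives: every projective of the heart is `H⁰` of a
derived projective. -/
def HasDerivedProjectives {t : TStructure C} (TD : TruncationData t) : Prop :=
  ∀ Q : Heart t, Projective Q → ∃ P : C, IsDerivedProjective t P ∧ Nonempty (TD.Hh.obj P ≅ Q)

/-- `D` has enough derived projectives. -/
def HasEnoughDerivedProjectives {t : TStructure C} (TD : TruncationData t) : Prop :=
  EnoughProjectives (Heart t) ∧ HasDerivedProjectives TD

/-- The extension closure of a class of objects. -/
inductive ExtClos (T : Set C) : C → Prop
  | of {X : C} : X ∈ T → ExtClos T X
  | zero {X : C} : IsZero X → ExtClos T X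
  | ext {A E B : C} (f : A ⟶ E) (g : E ⟶ B) (h : B ⟶ A⟦(1 : ℤ)⟧) :
      Triangle.mk f g h ∈ (distTriang C) → ExtClos T A → ExtClos T B → ExtClos T E

/-- The Karoubi (retract) closure of a class of objects. -/
def KarClos (T : Set C) : Set C := {X | ∃ Y ∈ T, IsRetractOf X Y}

/-- The triangulated subcategory generated by a class of objects. -/
inductive TriaClos (T : Set C) : C → Prop
  | of {X : C} : X ∈ T → TriaClos T X
  | zero {X : C} : IsZero X → TriaClos T X
  | shift {X : C} (n : ℤ) : TriaClos T X → TriaClos T (X⟦n⟧)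
  | ext {A E B : C} (f : A ⟶ E) (g : E ⟶ B) (h : B ⟶ A⟦(1 : ℤ)⟧) :
      Triangle.mk f g h ∈ (distTriang C) → TriaClos T A → TriaClos T B → TriaClos T E

/-- The thick subcategory generated by a class of objects. -/
inductive ThickClos (T : Set C) : C → Prop
  | of {X : C} : X ∈ T → ThickClos T X
  | zero {X : C} : IsZero X → ThickClos T X
  | shift {X : C} (n : ℤ) : ThickClos T X → ThickClos T (X⟦n⟧)
  | ext {A E B : C} (f : A ⟶ E) (g : E ⟶ B) (h : B ⟶ A⟦(1 : ℤ)⟧) :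
      Triangle.mk f g h ∈ (distTriang C) → ThickClos T A → ThickClos T B → ThickClos T E
  | retract {X Y : C} : IsRetractOf X Y → ThickClos T Y → ThickClos T X

/-- A thick subcategory, as a class of objects. -/
structure IsThickSet (T : Set C) : Prop where
  zero : ∀ X : C, IsZero X → X ∈ T
  shift : ∀ X ∈ T, ∀ n : ℤ, X⟦n⟧ ∈ T
  ext : ∀ (A E B : C) (f : A ⟶ E) (g : E ⟶ B) (h : B ⟶ A⟦(1 : ℤ)⟧),
    Triangle.mk f g h ∈ (distTriang C) → A ∈ T → B ∈ T → E ∈ T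
  retract : ∀ X Y : C, IsRetractOf X Y → Y ∈ T → X ∈ T

/-- A weight structure on the subcategory of `C` given by the class `CC`. -/
structure WeightStructureOn (CC : Set C) where
  le : Set C
  ge : Set C
  le_sub : le ⊆ CC
  ge_sub : ge ⊆ CC
  le_iso : ∀ X Y : C, (X ≅ Y) → X ∈ le → Y ∈ le
  ge_iso : ∀ X Y : C, (X ≅ Y) → X ∈ ge → Y ∈ ge
  le_retract : ∀ X Y : C, IsRetractOf X Y → Y ∈ le → X ∈ le
  ge_retract : ∀ X Y : C, IsRetractOf X Y → Y ∈ ge → X ∈ ge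
  le_shift : ∀ X ∈ le, X⟦(1 : ℤ)⟧ ∈ le
  ge_shift : ∀ X ∈ ge, X⟦(-1 : ℤ)⟧ ∈ ge
  orth : ∀ X : C, X⟦(1 : ℤ)⟧ ∈ ge → ∀ Y ∈ le, ∀ f : X ⟶ Y, f = 0
  decomp : ∀ X ∈ CC, ∃ (A B : C) (f : A ⟶ X) (g : X ⟶ B) (h : B ⟶ A⟦(1 : ℤ)⟧),
    Triangle.mk f g h ∈ (distTriang C) ∧ A⟦(1 : ℤ)⟧ ∈ ge ∧ B ∈ le

namespace WeightStructureOn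

variable {CC : Set C} (w : WeightStructureOn CC)

/-- `C_{w>0}`. -/
def gt : Set C := {X | X⟦(1 : ℤ)⟧ ∈ w.ge}

/-- `C_{w<0}`. -/
def lt : Set C := {X | X⟦(-1 : ℤ)⟧ ∈ w.le}

end WeightStructureOn


section Aux

/-- Yoneda exactness for a distinguished triangle, with cleanly-typed objects. -/
lemma yon₂ {X Y Z : C} {f : X ⟶ Y} {g : Y ⟶ Z} {h : Z ⟶ X⟦(1 : ℤ)⟧}
    (hT : Triangle.mk f g h ∈ distTriang C) {W : C} (φ : Y ⟶ W) (hφ : f ≫ φ = 0) :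
    ∃ ψ : Z ⟶ W, φ = g ≫ ψ := by
  obtain ⟨ψ, hψ⟩ := Triangle.yoneda_exact₂ _ hT φ hφ
  exact ⟨ψ, hψ⟩

/-- Yoneda exactness for a distinguished triangle, with cleanly-typed objects. -/
lemma yon₃ {X Y Z : C} {f : X ⟶ Y} {g : Y ⟶ Z} {h : Z ⟶ X⟦(1 : ℤ)⟧}
    (hT : Triangle.mk f g h ∈ distTriang C) {W : C} (φ : Z ⟶ W) (hφ : g ≫ φ = 0) :
    ∃ ψ : X⟦(1 : ℤ)⟧ ⟶ W, φ = h ≫ ψ := by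
  obtain ⟨ψ, hψ⟩ := Triangle.yoneda_exact₃ _ hT φ hφ
  exact ⟨ψ, hψ⟩

/-- Hom vanishing between `LE a` and `GE b` objects when `a < b`. -/
lemma tzero (t : TStructure C) {a b : ℤ} {X Y : C} (hX : t.le a X) (hY : t.ge b Y)
    (hab : a < b) (f : X ⟶ Y) : f = 0 := by
  have h1 : t.le 0 (X⟦a⟧) := t.le_shift a a 0 (add_zero a) X hX
  have h2 : t.ge (a + 1) Y := t.ge_antitone (by omega : a + 1 ≤ b) Y hY
  have h3 : t.ge 1 (Y⟦a⟧) := t.ge_shift (a + 1) a 1 rfl Y h2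
  have h4 := t.zero' ((shiftFunctor C a).map f) h1 h3
  apply (shiftFunctor C a).map_injective
  rw [h4, Functor.map_zero]

/-- The class `t.le n` is closed under extensions. -/
lemma le_ext₂ (t : TStructure C) {T : Triangle C} (hT : T ∈ distTriang C) {n : ℤ}
    (h1 : t.le n T.obj₁) (h3 : t.le n T.obj₃) : t.le n T.obj₂ := by
  obtain ⟨X, Y, hX, hY, x, y, z, hT2⟩ := t.exists_triangle T.obj₂ n (n + 1) rfl
  have hy0 : T.mor₁ ≫ y = 0 := tzero t h1 hY (by omega) _
  obtain ⟨w, hw⟩ := Triangle.yoneda_exact₂ T hT y hy0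
  have hw0 : w = 0 := tzero t h3 hY (by omega) w
  have hy : y = 0 := by rw [hw, hw0, comp_zero]
  obtain ⟨r, hr⟩ := Triangle.yoneda_exact₃ _ hT2 (𝟙 Y)
    (show y ≫ 𝟙 Y = 0 by rw [Category.comp_id]; exact hy)
  have hr0 : r = 0 := tzero t (t.le_shift n 1 (n - 1) (by omega) X hX) hY (by omega) r
  have hzero : IsZero Y := by
    rw [IsZero.iff_id_eq_zero, hr, hr0]; exact comp_zero
  haveI : IsIso x := (Triangle.isZero₃_iff_isIso₁ _ hT2).1 hzero
  exact ((t.le n).prop_iff_of_iso (asIso x)).1 hX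

/-- `τ≥0` of an object of `D^{t≤0}` stays in `D^{t≤0}`. -/
lemma tauge_le' (t : TStructure C) {τge : C ⥤ C} (η : 𝟭 C ⟶ τge)
    (gm : ∀ X : C, t.ge 0 (τge.obj X))
    (gf : ∀ (X Z : C), t.ge 0 Z → ∀ f : X ⟶ Z, ∃! g : τge.obj X ⟶ Z, η.app X ≫ g = f)
    {V : C} (hV : t.le 0 V) : t.le 0 (τge.obj V) := by
  obtain ⟨B, Y, hB, hYge, b, v, z, hT⟩ := t.exists_triangle V (-1) 0 (by omega)
  have hYle : t.le 0 Y := le_ext₂ t (rot_of_distTriang _ hT) hV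
    (t.le_monotone (by omega : (-2 : ℤ) ≤ 0) _ (t.le_shift (-1) 1 (-2) (by omega) B hB))
  obtain ⟨c, hc, _⟩ := gf V Y hYge v
  have hbη : b ≫ η.app V = 0 := tzero t hB (gm V) (by omega) _
  obtain ⟨d, hd⟩ := yon₂ hT (η.app V) hbη
  have hcd : c ≫ d = 𝟙 (τge.obj V) := by
    obtain ⟨e, he, heu⟩ := gf V (τge.obj V) (gm V) (η.app V)
    rw [heu (c ≫ d) ((Category.assoc _ _ _).symm.trans
        ((congrArg (fun m => m ≫ d) hc).trans hd.symm)),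
      heu (𝟙 _) (show η.app V ≫ 𝟙 (τge.obj V) = η.app V from Category.comp_id _)]
  have hdc : d ≫ c = 𝟙 Y := by
    have e1 : v ≫ (d ≫ c) = v := (Category.assoc _ _ _).symm.trans
      ((congrArg (fun m => m ≫ c) hd.symm).trans hc)
    have hv0 : v ≫ (d ≫ c - 𝟙 Y) = 0 := by
      rw [Preadditive.comp_sub, e1, Category.comp_id, sub_self]
    obtain ⟨r, hr⟩ := yon₃ hT (d ≫ c - 𝟙 Y) hv0
    have h0 : d ≫ c - 𝟙 Y = 0 := by
      rw [hr, tzero t (t.le_shift (-1) 1 (-2) (by omega) B hB) hYge (by omega) r, comp_zero]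
    rwa [sub_eq_zero] at h0
  exact ((t.le 0).prop_iff_of_iso (Iso.mk d c hdc hcd)).1 hYle

/-- On objects of `D^{t≤0}`, the counit of `τ≤0` is invertible. -/
lemma counit_isIso' (t : TStructure C) {τle : C ⥤ C} (ε : τle ⟶ 𝟭 C)
    (lm : ∀ X : C, t.le 0 (τle.obj X))
    (lf : ∀ (X Z : C), t.le 0 Z → ∀ f : Z ⟶ X, ∃! g : Z ⟶ τle.obj X, g ≫ ε.app X = f)
    {A : C} (hA : t.le 0 A) : IsIso (ε.app A) := by
  obtain ⟨j, hj, _⟩ := lf A A hA (𝟙 A)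
  obtain ⟨e, he, heu⟩ := lf A (τle.obj A) (lm A) (ε.app A)
  exact ⟨j, by
    rw [heu (ε.app A ≫ j) ((Category.assoc _ _ _).trans
        ((congrArg (fun m => ε.app A ≫ m) hj).trans (Category.comp_id _))),
      heu (𝟙 _) (show 𝟙 (τle.obj A) ≫ ε.app A = ε.app A from Category.id_comp _)], hj⟩

/-- Key cancellation: if `H⁰(f)` is epi and `f ≫ φ = 0` for a map `φ` to a heart
object, then `φ = 0`. -/
lemma key_cancel (t : TStructure C) (TD : TruncationData t) {P P' : C}
    (hP' : t.le 0 P') (f : P ⟶ P') (h3 : Epi (TD.Hh.map f)) {Y : C}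
    (hYle : t.le 0 Y) (hYge : t.ge 0 Y) (φ : P' ⟶ Y) (hφ : f ≫ φ = 0) : φ = 0 := by
  obtain ⟨H, hh, τle, ε, lm, lf, τge, η, gm, gf, hHeq⟩ := TD
  subst hHeq
  haveI : IsIso (ε.app (τge.obj P')) := counit_isIso' t ε lm lf (tauge_le' t η gm gf hP')
  obtain ⟨φ₁, hφ₁, _⟩ := gf P' Y hYge φ
  have hz : τge.map f ≫ φ₁ = 0 := by
    obtain ⟨z0, hz0, hz0u⟩ := gf P Y hYge (0 : P ⟶ Y)
    exact (hz0u (τge.map f ≫ φ₁)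
      (show η.app P ≫ τge.map f ≫ φ₁ = 0 by
        rw [← Category.assoc, ← η.naturality f, Functor.id_map, Category.assoc, hφ₁, hφ])).trans
      (hz0u 0 (show η.app P ≫ (0 : τge.obj P ⟶ Y) = 0 from comp_zero)).symm
  have hq : (ε.app (τge.obj P') ≫ φ₁ : τle.obj (τge.obj P') ⟶ Y) = 0 := by
    refine congrArg InducedCategory.Hom.hom (h3.left_cancellation (Z := ⟨Y, hYle, hYge⟩)
      (ObjectProperty.homMk (ε.app (τge.obj P') ≫ φ₁ : τle.obj (τge.obj P') ⟶ Y))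
      (ObjectProperty.homMk (0 : τle.obj (τge.obj P') ⟶ Y)) ?_)
    apply ObjectProperty.hom_ext
    show τle.map (τge.map f) ≫ (ε.app (τge.obj P') ≫ φ₁) =
      τle.map (τge.map f) ≫ (0 : τle.obj (τge.obj P') ⟶ Y)
    rw [comp_zero, ← Category.assoc, ε.naturality (τge.map f), Functor.id_map,
      Category.assoc, hz, comp_zero]
  have hφ₁0 : φ₁ = 0 := by
    rw [← cancel_epi (ε.app (τge.obj P')), comp_zero]
    exact hq
  rw [← hφ₁, hφ₁0, comp_zero]

end Aux

/-- characterizations of split epimorphisms between derived projectives. -/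
theorem derivedProjective_split_epi_tfae [HasFiniteBiproducts C]
    (hKS : IsKrullSchmidt (C := C)) (t : TStructure C) (TD : TruncationData t)
    {P P' : C} (hP : IsDerivedProjective t P) (hP' : IsDerivedProjective t P')
    (f : P ⟶ P') :
    List.TFAE [
      ∃ s : P' ⟶ P, s ≫ f = 𝟙 P',
      ∃ (Z : C) (g : P' ⟶ Z) (h : Z ⟶ P⟦(1 : ℤ)⟧),
        Triangle.mk f g h ∈ (distTriang C) ∧ t.le (-1) Z,
      Epi (TD.Hh.map f),
      ∃ s : TD.Hh.obj P' ⟶ TD.Hh.obj P, s ≫ TD.Hh.map f = 𝟙 (TD.Hh.obj P')] := by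
  tfae_have 1 → 4 := by
    rintro ⟨s, hs⟩
    exact ⟨TD.Hh.map s, by rw [← TD.Hh.map_comp, hs, TD.Hh.map_id]⟩
  tfae_have 4 → 3 := by
    rintro ⟨s, hs⟩
    exact ⟨fun g h hgh => by
      rw [← Category.id_comp g, ← hs, Category.assoc, hgh, ← Category.assoc, hs,
        Category.id_comp]⟩
  tfae_have 3 → 2 := by
    intro h3
    obtain ⟨Z, g, h, hT⟩ := distinguished_cocone_triangle f
    have hZle : t.le 0 Z := le_ext₂ t (rot_of_distTriang _ hT) hP'.1
      (t.le_monotone (by omega : (-1 : ℤ) ≤ 0) _ (t.le_shift 0 1 (-1) (by omega) P hP.1))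
    obtain ⟨B, Y, hB, hYge, b, u, w, hT2⟩ := t.exists_triangle Z (-1) 0 (by omega)
    have hYle : t.le 0 Y := le_ext₂ t (rot_of_distTriang _ hT2) hZle
      (t.le_monotone (by omega : (-2 : ℤ) ≤ 0) _ (t.le_shift (-1) 1 (-2) (by omega) B hB))
    have hfg : f ≫ g = 0 := comp_distTriang_mor_zero₁₂ _ hT
    have hgu : g ≫ u = 0 := key_cancel t TD hP'.1 f h3 hYle hYge (g ≫ u)
      (by rw [← Category.assoc, hfg, zero_comp])
    have hu : u = 0 := by
      obtain ⟨v, hv⟩ := Triangle.yoneda_exact₃ _ hT u hgu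
      rw [hv, tzero t (t.le_shift 0 1 (-1) (by omega) P hP.1) hYge (by omega) v]; exact comp_zero
    have hY0 : IsZero Y := by
      obtain ⟨r, hr⟩ := Triangle.yoneda_exact₃ _ hT2 (𝟙 Y)
        (show u ≫ 𝟙 Y = 0 by rw [Category.comp_id]; exact hu)
      rw [IsZero.iff_id_eq_zero, hr,
        tzero t (t.le_shift (-1) 1 (-2) (by omega) B hB) hYge (by omega) r]; exact comp_zero
    haveI : IsIso b := (Triangle.isZero₃_iff_isIso₁ _ hT2).1 hY0
    exact ⟨Z, g, h, hT, ((t.le (-1)).prop_iff_of_iso (asIso b)).1 hB⟩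
  tfae_have 2 → 1 := by
    rintro ⟨Z, g, h, hT, hZ⟩
    have hg : g = 0 := by
      have hX : t.le 0 (Z⟦(-1 : ℤ)⟧) := t.le_shift (-1) (-1) 0 (by omega) Z hZ
      have h0 := hP'.2 _ hX (g ≫ ((shiftEquiv C (1 : ℤ)).counitIso.app Z).inv)
      have h1 := congrArg (fun φ => φ ≫ ((shiftEquiv C (1 : ℤ)).counitIso.app Z).hom) h0
      exact (cancel_mono ((shiftEquiv C (1 : ℤ)).counitIso.app Z).inv).1 (h0.trans zero_comp.symm)
    obtain ⟨s, hs⟩ := Triangle.coyoneda_exact₂ _ hT (𝟙 P')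
      (by exact (Category.id_comp g).trans hg)
    exact ⟨s, hs.symm⟩
  tfae_finish

end Paper
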